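/- Let D ⊆ ℝ² be open and let Ψ : ℝ² → 𝔹 be four times continuously differentiable on D and satisfy the Cauchy–Riemann analogue ∂Ψ/∂y(x,y) = (∂Ψ/∂x(x,y))·e₂ for all (x,y) ∈ D. Then Δ²Ψ := ∂⁴Ψ/∂x⁴ + 2·∂⁴Ψ/∂x²∂y² + ∂⁴Ψ/∂y⁴ = 0 on D; in particular each of the four real components Uⱼ[Ψ(x,y)] (j = 1,2,3,4) is a biharmonic function on D. -/

import Mathlib

/-- The biharmonic algebra `𝔹`, realized as the dual numbers over `ℂ`. -/
noncomputable abbrev 𝔹 : Type := DualNumber ℂ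

/-- The basis element `e₁ = 1` of the biharmonic algebra. -/
noncomputable def e₁ : 𝔹 := 1

/-- The basis element `e₂ = i + ε` of the biharmonic algebra. -/
noncomputable def e₂ : 𝔹 := Complex.I • 1 + DualNumber.eps

/-- First real component in the decomposition `a = U₁·e₁ + U₂·i·e₁ + U₃·e₂ + U₄·i·e₂`. -/
noncomputable def U₁ (a : 𝔹) : ℝ := a.fst.re + a.snd.im

/-- Second real component. -/
noncomputable def U₂ (a : 𝔹) : ℝ := a.fst.im - a.snd.re

/-- Third real component. -/
noncomputable def U₃ (a : 𝔹) : ℝ := a.snd.re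

/-- Fourth real component. -/
noncomputable def U₄ (a : 𝔹) : ℝ := a.snd.im

/-- Partial derivative in the `x`-direction. -/
noncomputable def pdx {E : Type*} [NormedAddCommGroup E] [NormedSpace ℝ E]
    (f : ℝ × ℝ → E) (p : ℝ × ℝ) : E := fderiv ℝ f p (1, 0)

/-- Partial derivative in the `y`-direction. -/
noncomputable def pdy {E : Type*} [NormedAddCommGroup E] [NormedSpace ℝ E]
    (f : ℝ × ℝ → E) (p : ℝ × ℝ) : E := fderiv ℝ f p (0, 1)

/-- A real-valued function is biharmonic on an open set if it is four times continuously
differentiable there and satisfies `W_xxxx + 2 W_xxyy + W_yyyy = 0`. -/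
def IsBiharmonicOn (W : ℝ × ℝ → ℝ) (D : Set (ℝ × ℝ)) : Prop :=
  ContDiffOn ℝ 4 W D ∧
    ∀ p ∈ D, pdx (pdx (pdx (pdx W))) p + 2 * pdx (pdx (pdy (pdy W))) p
      + pdy (pdy (pdy (pdy W))) p = 0

/-! ### Auxiliary material -/

section Aux

variable {E F : Type*} [NormedAddCommGroup E] [NormedSpace ℝ E]
  [NormedAddCommGroup F] [NormedSpace ℝ F]

/-- Directional partial derivative. -/
noncomputable def pd (v : ℝ × ℝ) (f : ℝ × ℝ → E) (p : ℝ × ℝ) : E := fderiv ℝ f p v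

lemma pdx_eq_pd : (pdx : (ℝ × ℝ → E) → ℝ × ℝ → E) = pd (1, 0) := rfl

lemma pdy_eq_pd : (pdy : (ℝ × ℝ → E) → ℝ × ℝ → E) = pd (0, 1) := rfl

lemma pd_congr {f g : ℝ × ℝ → E} {D : Set (ℝ × ℝ)} (hD : IsOpen D)
    (h : ∀ q ∈ D, f q = g q) {p : ℝ × ℝ} (hp : p ∈ D) (v : ℝ × ℝ) :
    pd v f p = pd v g p := by
  unfold pd
  rw [Filter.EventuallyEq.fderiv_eq
    (Filter.eventuallyEq_of_mem (hD.mem_nhds hp) (fun q hq => h q hq))]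

lemma pd_comp {f : ℝ × ℝ → E} (L : E →L[ℝ] F) {p : ℝ × ℝ}
    (hf : DifferentiableAt ℝ f p) (v : ℝ × ℝ) :
    pd v (fun q => L (f q)) p = L (pd v f p) := by
  have h1 : fderiv ℝ (fun q => L (f q)) p = L.comp (fderiv ℝ f p) :=
    (L.hasFDerivAt.comp p hf.hasFDerivAt).fderiv
  show fderiv ℝ (fun q => L (f q)) p v = L (fderiv ℝ f p v)
  rw [h1]; rfl

lemma pd_contDiffOn {f : ℝ × ℝ → E} {D : Set (ℝ × ℝ)} (hD : IsOpen D)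
    {n m : WithTop ℕ∞} (hf : ContDiffOn ℝ n f D) (hmn : m + 1 ≤ n) (v : ℝ × ℝ) :
    ContDiffOn ℝ m (pd v f) D :=
  (ContinuousLinearMap.apply ℝ E v).contDiff.comp_contDiffOn
    (hf.fderiv_of_isOpen hD hmn)

lemma pd_diffOn {f : ℝ × ℝ → E} {D : Set (ℝ × ℝ)} (hD : IsOpen D)
    {n : WithTop ℕ∞} (hf : ContDiffOn ℝ n f D) (hn : 2 ≤ n) (v : ℝ × ℝ)
    {p : ℝ × ℝ} (hp : p ∈ D) : DifferentiableAt ℝ (pd v f) p := by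
  have h1 : ContDiffOn ℝ 1 (pd v f) D := pd_contDiffOn hD hf (by exact_mod_cast hn) v
  exact (h1.contDiffAt (hD.mem_nhds hp)).differentiableAt one_ne_zero

lemma diffAt_of_contDiffOn {f : ℝ × ℝ → E} {D : Set (ℝ × ℝ)} (hD : IsOpen D)
    {n : WithTop ℕ∞} (hf : ContDiffOn ℝ n f D) (hn : 1 ≤ n)
    {p : ℝ × ℝ} (hp : p ∈ D) : DifferentiableAt ℝ f p :=
  (hf.contDiffAt (hD.mem_nhds hp)).differentiableAt (zero_lt_one.trans_le hn).ne'

lemma pd_comm {f : ℝ × ℝ → E} {p : ℝ × ℝ} (hf : ContDiffAt ℝ 2 f p) (v w : ℝ × ℝ) :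
    pd v (pd w f) p = pd w (pd v f) p := by
  have hsymm : IsSymmSndFDerivAt ℝ f p := hf.isSymmSndFDerivAt (by simp [minSmoothness_of_isRCLikeNormedField])
  have hdf : DifferentiableAt ℝ (fderiv ℝ f) p := by
    have h1 : ContDiffAt ℝ 1 (fderiv ℝ f) p := hf.fderiv_right (le_refl 2)
    exact h1.differentiableAt one_ne_zero
  have h1 : pd v (pd w f) p = (ContinuousLinearMap.apply ℝ E w) (pd v (fderiv ℝ f) p) :=
    pd_comp (ContinuousLinearMap.apply ℝ E w) hdf v
  have h2 : pd w (pd v f) p = (ContinuousLinearMap.apply ℝ E v) (pd w (fderiv ℝ f) p) :=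
    pd_comp (ContinuousLinearMap.apply ℝ E v) hdf w
  rw [h1, h2]
  exact hsymm v w

/-- CR propagation: if `g` satisfies the Cauchy–Riemann-type relation on `D`,
then so does every first-order partial of it. -/
lemma CR_propagate {D : Set (ℝ × ℝ)} (hD : IsOpen D) (M : E →L[ℝ] E)
    {g : ℝ × ℝ → E} {n : WithTop ℕ∞} (hn : 2 ≤ n) (hg : ContDiffOn ℝ n g D)
    (hcr : ∀ p ∈ D, pd (0, 1) g p = M (pd (1, 0) g p)) (v : ℝ × ℝ) :
    ∀ p ∈ D, pd (0, 1) (pd v g) p = M (pd (1, 0) (pd v g) p) := by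
  intro p hp
  have hgp : ContDiffAt ℝ 2 g p := (hg.contDiffAt (hD.mem_nhds hp)).of_le hn
  have hdx : DifferentiableAt ℝ (pd (1, 0) g) p := pd_diffOn hD hg hn (1, 0) hp
  calc pd (0, 1) (pd v g) p = pd v (pd (0, 1) g) p := pd_comm hgp (0, 1) v
    _ = pd v (fun q => M (pd (1, 0) g q)) p := pd_congr hD hcr hp v
    _ = M (pd v (pd (1, 0) g) p) := pd_comp M hdx v
    _ = M (pd (1, 0) (pd v g) p) := by rw [pd_comm hgp v (1, 0)]

/-- Second-order consequence: `∂²g/∂y² = M²(∂²g/∂x²)` on `D`. -/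
lemma CR_sq {D : Set (ℝ × ℝ)} (hD : IsOpen D) (M : E →L[ℝ] E)
    {g : ℝ × ℝ → E} {n : WithTop ℕ∞} (hn : 2 ≤ n) (hg : ContDiffOn ℝ n g D)
    (hcr : ∀ p ∈ D, pd (0, 1) g p = M (pd (1, 0) g p)) :
    ∀ p ∈ D, pd (0, 1) (pd (0, 1) g) p = M (M (pd (1, 0) (pd (1, 0) g) p)) := by
  intro p hp
  have hgp : ContDiffAt ℝ 2 g p := (hg.contDiffAt (hD.mem_nhds hp)).of_le hn
  calc pd (0, 1) (pd (0, 1) g) p = M (pd (1, 0) (pd (0, 1) g) p) :=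
        CR_propagate hD M hn hg hcr (0, 1) p hp
    _ = M (pd (0, 1) (pd (1, 0) g) p) := by rw [pd_comm hgp (1, 0) (0, 1)]
    _ = M (M (pd (1, 0) (pd (1, 0) g) p)) := by
        rw [CR_propagate hD M hn hg hcr (1, 0) p hp]

/-- Pulling a continuous linear map through four partial derivatives. -/
lemma pd_comp4 {D : Set (ℝ × ℝ)} (hD : IsOpen D) {f : ℝ × ℝ → E}
    (hf : ContDiffOn ℝ 4 f D) (L : E →L[ℝ] F) (v₁ v₂ v₃ v₄ : ℝ × ℝ) :
    ∀ p ∈ D, pd v₁ (pd v₂ (pd v₃ (pd v₄ (fun q => L (f q))))) p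
      = L (pd v₁ (pd v₂ (pd v₃ (pd v₄ f))) p) := by
  have c3 : ContDiffOn ℝ 3 (pd v₄ f) D := pd_contDiffOn hD hf (by norm_num) v₄
  have c2 : ContDiffOn ℝ 2 (pd v₃ (pd v₄ f)) D := pd_contDiffOn hD c3 (by norm_num) v₃
  have c1 : ContDiffOn ℝ 1 (pd v₂ (pd v₃ (pd v₄ f))) D :=
    pd_contDiffOn hD c2 (by norm_num) v₂
  have h4 : ∀ p ∈ D, pd v₄ (fun q => L (f q)) p = L (pd v₄ f p) := fun p hp =>
    pd_comp L (diffAt_of_contDiffOn hD hf (by norm_num) hp) v₄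
  have h3 : ∀ p ∈ D, pd v₃ (pd v₄ (fun q => L (f q))) p = L (pd v₃ (pd v₄ f) p) := by
    intro p hp
    calc pd v₃ (pd v₄ (fun q => L (f q))) p = pd v₃ (fun q => L (pd v₄ f q)) p :=
          pd_congr hD h4 hp v₃
      _ = L (pd v₃ (pd v₄ f) p) :=
          pd_comp L (diffAt_of_contDiffOn hD c3 (by norm_num) hp) v₃
  have h2 : ∀ p ∈ D, pd v₂ (pd v₃ (pd v₄ (fun q => L (f q)))) p
      = L (pd v₂ (pd v₃ (pd v₄ f)) p) := by
    intro p hp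
    calc pd v₂ (pd v₃ (pd v₄ (fun q => L (f q)))) p
        = pd v₂ (fun q => L (pd v₃ (pd v₄ f) q)) p := pd_congr hD h3 hp v₂
      _ = L (pd v₂ (pd v₃ (pd v₄ f)) p) :=
          pd_comp L (diffAt_of_contDiffOn hD c2 (by norm_num) hp) v₂
  intro p hp
  calc pd v₁ (pd v₂ (pd v₃ (pd v₄ (fun q => L (f q))))) p
      = pd v₁ (fun q => L (pd v₂ (pd v₃ (pd v₄ f)) q)) p := pd_congr hD h2 hp v₁
    _ = L (pd v₁ (pd v₂ (pd v₃ (pd v₄ f))) p) :=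
        pd_comp L (diffAt_of_contDiffOn hD c1 le_rfl hp) v₁

end Aux

/-- The key algebraic identity `(1 + e₂²)² = 0`. -/
lemma e2_key : ((1 : 𝔹) + e₂ * e₂) * ((1 : 𝔹) + e₂ * e₂) = 0 := by
  have hf : TrivSqZeroExt.fst e₂ = Complex.I := by
    simp [e₂, TrivSqZeroExt.fst_add, TrivSqZeroExt.fst_smul, DualNumber.fst_eps]
  have hs : TrivSqZeroExt.snd e₂ = 1 := by
    simp [e₂, TrivSqZeroExt.snd_add, TrivSqZeroExt.snd_smul, DualNumber.snd_eps]
  ext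
  · simp [TrivSqZeroExt.fst_mul, TrivSqZeroExt.fst_add, hf, hs]
  · simp [TrivSqZeroExt.snd_mul, TrivSqZeroExt.fst_mul, TrivSqZeroExt.fst_add,
      TrivSqZeroExt.snd_add, hf, hs]

lemma biharm_alg (a : 𝔹) :
    a + (2 : ℝ) • (a * e₂ * e₂) + a * e₂ * e₂ * e₂ * e₂ = 0 := by
  have h : a + (2 : ℝ) • (a * e₂ * e₂) + a * e₂ * e₂ * e₂ * e₂
      = a * (((1 : 𝔹) + e₂ * e₂) * ((1 : 𝔹) + e₂ * e₂)) := by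
    rw [two_smul ℝ (a * e₂ * e₂)]; ring
  rw [h, e2_key, mul_zero]

/-- Right multiplication by `e₂` as a continuous `ℝ`-linear map. -/
noncomputable def Me : 𝔹 →L[ℝ] 𝔹 := (ContinuousLinearMap.mul ℝ 𝔹).flip e₂

lemma Me_apply (a : 𝔹) : Me a = a * e₂ := rfl

noncomputable def fstR : 𝔹 →L[ℝ] ℂ := (TrivSqZeroExt.fstCLM ℂ ℂ).restrictScalars ℝ
noncomputable def sndR : 𝔹 →L[ℝ] ℂ := (TrivSqZeroExt.sndCLM ℂ ℂ).restrictScalars ℝ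
noncomputable def L₁ : 𝔹 →L[ℝ] ℝ := Complex.reCLM.comp fstR + Complex.imCLM.comp sndR
noncomputable def L₂ : 𝔹 →L[ℝ] ℝ := Complex.imCLM.comp fstR - Complex.reCLM.comp sndR
noncomputable def L₃ : 𝔹 →L[ℝ] ℝ := Complex.reCLM.comp sndR
noncomputable def L₄ : 𝔹 →L[ℝ] ℝ := Complex.imCLM.comp sndR

lemma L₁_eq : (L₁ : 𝔹 → ℝ) = U₁ := rfl
lemma L₂_eq : (L₂ : 𝔹 → ℝ) = U₂ := rfl
lemma L₃_eq : (L₃ : 𝔹 → ℝ) = U₃ := rfl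
lemma L₄_eq : (L₄ : 𝔹 → ℝ) = U₄ := rfl

/-- If `Ψ : ℝ² → 𝔹` is `C⁴` on an open set `D` and satisfies the Cauchy–Riemann analogue
`∂Ψ/∂y = (∂Ψ/∂x)·e₂` on `D`, then `Δ²Ψ = 0` on `D`; in particular each of the four real
components `Uⱼ[Ψ]` is biharmonic on `D`. -/
theorem monogenic_components_biharmonic
    (D : Set (ℝ × ℝ)) (hD : IsOpen D) (Ψ : ℝ × ℝ → 𝔹)
    (hC4 : ContDiffOn ℝ 4 Ψ D)
    (hCR : ∀ p ∈ D, pdy Ψ p = pdx Ψ p * e₂) :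
    (∀ p ∈ D, pdx (pdx (pdx (pdx Ψ))) p + (2 : ℝ) • pdx (pdx (pdy (pdy Ψ))) p
        + pdy (pdy (pdy (pdy Ψ))) p = 0) ∧
    IsBiharmonicOn (fun p => U₁ (Ψ p)) D ∧
    IsBiharmonicOn (fun p => U₂ (Ψ p)) D ∧
    IsBiharmonicOn (fun p => U₃ (Ψ p)) D ∧
    IsBiharmonicOn (fun p => U₄ (Ψ p)) D := by
  -- notation
  have hcr0 : ∀ p ∈ D, pd (0, 1) Ψ p = Me (pd (1, 0) Ψ p) := by
    intro p hp
    rw [Me_apply]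
    exact hCR p hp
  -- smoothness of iterated partials
  have c3x : ContDiffOn ℝ 3 (pd (1, 0) Ψ) D := pd_contDiffOn hD hC4 (by norm_num) _
  have c3y : ContDiffOn ℝ 3 (pd (0, 1) Ψ) D := pd_contDiffOn hD hC4 (by norm_num) _
  have c2xx : ContDiffOn ℝ 2 (pd (1, 0) (pd (1, 0) Ψ)) D :=
    pd_contDiffOn hD c3x (by norm_num) _
  have c2yy : ContDiffOn ℝ 2 (pd (0, 1) (pd (0, 1) Ψ)) D :=
    pd_contDiffOn hD c3y (by norm_num) _
  have c1xxx : ContDiffOn ℝ 1 (pd (1, 0) (pd (1, 0) (pd (1, 0) Ψ))) D :=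
    pd_contDiffOn hD c2xx (by norm_num) _
  -- CR relations for derivatives
  have cr_y : ∀ p ∈ D, pd (0, 1) (pd (0, 1) Ψ) p = Me (pd (1, 0) (pd (0, 1) Ψ) p) :=
    CR_propagate hD Me (by norm_num) hC4 hcr0 (0, 1)
  have cr_yy : ∀ p ∈ D,
      pd (0, 1) (pd (0, 1) (pd (0, 1) Ψ)) p = Me (pd (1, 0) (pd (0, 1) (pd (0, 1) Ψ)) p) :=
    CR_propagate hD Me (by norm_num) c3y cr_y (0, 1)
  -- second-order identities
  have sq0 : ∀ p ∈ D,
      pd (0, 1) (pd (0, 1) Ψ) p = Me (Me (pd (1, 0) (pd (1, 0) Ψ) p)) :=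
    CR_sq hD Me (by norm_num) hC4 hcr0
  have sq2 : ∀ p ∈ D,
      pd (0, 1) (pd (0, 1) (pd (0, 1) (pd (0, 1) Ψ))) p
        = Me (Me (pd (1, 0) (pd (1, 0) (pd (0, 1) (pd (0, 1) Ψ))) p)) :=
    CR_sq hD Me (by norm_num) c2yy cr_yy
  -- x-derivatives of the second-order identity
  have G : ∀ p ∈ D,
      pd (1, 0) (pd (0, 1) (pd (0, 1) Ψ)) p
        = (Me.comp Me) (pd (1, 0) (pd (1, 0) (pd (1, 0) Ψ)) p) := by
    intro p hp
    calc pd (1, 0) (pd (0, 1) (pd (0, 1) Ψ)) p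
        = pd (1, 0) (fun q => Me (Me (pd (1, 0) (pd (1, 0) Ψ) q))) p :=
          pd_congr hD sq0 hp _
      _ = (Me.comp Me) (pd (1, 0) (pd (1, 0) (pd (1, 0) Ψ)) p) :=
          pd_comp (Me.comp Me) (diffAt_of_contDiffOn hD c2xx (by norm_num) hp) _
  have T1 : ∀ p ∈ D,
      pd (1, 0) (pd (1, 0) (pd (0, 1) (pd (0, 1) Ψ))) p
        = Me (Me (pd (1, 0) (pd (1, 0) (pd (1, 0) (pd (1, 0) Ψ))) p)) := by
    intro p hp
    calc pd (1, 0) (pd (1, 0) (pd (0, 1) (pd (0, 1) Ψ))) p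
        = pd (1, 0) (fun q => (Me.comp Me) (pd (1, 0) (pd (1, 0) (pd (1, 0) Ψ)) q)) p :=
          pd_congr hD G hp _
      _ = (Me.comp Me) (pd (1, 0) (pd (1, 0) (pd (1, 0) (pd (1, 0) Ψ))) p) :=
          pd_comp (Me.comp Me) (diffAt_of_contDiffOn hD c1xxx le_rfl hp) _
      _ = Me (Me (pd (1, 0) (pd (1, 0) (pd (1, 0) (pd (1, 0) Ψ))) p)) := rfl
  have T2 : ∀ p ∈ D,
      pd (0, 1) (pd (0, 1) (pd (0, 1) (pd (0, 1) Ψ))) p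
        = Me (Me (Me (Me (pd (1, 0) (pd (1, 0) (pd (1, 0) (pd (1, 0) Ψ))) p)))) := by
    intro p hp
    rw [sq2 p hp]
    -- need pd (1,0) (pd (1,0) (pd (0,1) (pd (0,1) Ψ))) p = Me (Me A)
    rw [T1 p hp]
  -- the main 𝔹-valued identity
  have main : ∀ p ∈ D,
      pd (1, 0) (pd (1, 0) (pd (1, 0) (pd (1, 0) Ψ))) p
        + (2 : ℝ) • pd (1, 0) (pd (1, 0) (pd (0, 1) (pd (0, 1) Ψ))) p
        + pd (0, 1) (pd (0, 1) (pd (0, 1) (pd (0, 1) Ψ))) p = 0 := by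
    intro p hp
    rw [T1 p hp, T2 p hp]
    set a := pd (1, 0) (pd (1, 0) (pd (1, 0) (pd (1, 0) Ψ))) p with ha
    show a + (2 : ℝ) • (a * e₂ * e₂) + a * e₂ * e₂ * e₂ * e₂ = 0
    exact biharm_alg a
  constructor
  · simpa only [pdx_eq_pd, pdy_eq_pd] using main
  -- components
  have comp_biharm : ∀ L : 𝔹 →L[ℝ] ℝ, IsBiharmonicOn (fun p => L (Ψ p)) D := by
    intro L
    constructor
    · exact L.contDiff.comp_contDiffOn hC4
    · intro p hp
      simp only [pdx_eq_pd, pdy_eq_pd]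
      rw [pd_comp4 hD hC4 L (1, 0) (1, 0) (1, 0) (1, 0) p hp,
        pd_comp4 hD hC4 L (1, 0) (1, 0) (0, 1) (0, 1) p hp,
        pd_comp4 hD hC4 L (0, 1) (0, 1) (0, 1) (0, 1) p hp]
      have h2 : (2 : ℝ) * L (pd (1, 0) (pd (1, 0) (pd (0, 1) (pd (0, 1) Ψ))) p)
          = L ((2 : ℝ) • pd (1, 0) (pd (1, 0) (pd (0, 1) (pd (0, 1) Ψ))) p) := by
        rw [map_smul, smul_eq_mul]
      rw [h2, ← map_add, ← map_add, main p hp, map_zero]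
  refine ⟨?_, ?_, ?_, ?_⟩
  · have := comp_biharm L₁; rwa [L₁_eq] at this
  · have := comp_biharm L₂; rwa [L₂_eq] at this
  · have := comp_biharm L₃; rwa [L₃_eq] at this
  · have := comp_biharm L₄; rwa [L₄_eq] at this
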